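/- Let f : (𝔽₂)⁴ → (𝔽₂)⁴ be a weakly APN permutation with f(0)=0. Then the algebraic degree of f equals 3 and n₃(f) ∈ {14, 15}, where n₃(f) is the number of nonzero v ∈ (𝔽₂)⁴ with deg⟨f,v⟩ = 3. -/

import Mathlib

/-- The vector space `(𝔽₂)⁴`. -/
abbrev V4 := Fin 4 → ZMod 2

/-- The derivative `f̂_u : x ↦ f(x+u) + f(x)`. -/
def deriv4 (f : V4 → V4) (u x : V4) : V4 := f (x + u) + f x

/-- The 𝔽₂-dot product on `(𝔽₂)⁴`. -/
def dot4 (v w : V4) : ZMod 2 := ∑ i, v i * w i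

/-- `f` is weakly APN: for every `u ≠ 0`, `|Im f̂_u| > 4 = 2^{4-2}`. -/
def WeaklyAPN4 (f : V4 → V4) : Prop :=
  ∀ u : V4, u ≠ 0 → 4 < (Set.range (deriv4 f u)).ncard

/-- `f` is 4-differentially uniform. -/
def DiffUnif4 (f : V4 → V4) : Prop :=
  ∀ u : V4, u ≠ 0 → ∀ v : V4, {x : V4 | deriv4 f u x = v}.ncard ≤ 4

/-- The coefficient of the monomial `∏_{i ∈ S} xᵢ` in the algebraic normal form of `g`. -/
def anfCoeff (g : V4 → ZMod 2) (S : Finset (Fin 4)) : ZMod 2 :=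
  ∑ x ∈ Finset.univ.filter (fun x : V4 => ∀ i, x i = 1 → i ∈ S), g x

/-- The algebraic degree of `g` is at most `d`. -/
def DegLE (g : V4 → ZMod 2) (d : ℕ) : Prop :=
  ∀ S : Finset (Fin 4), d < S.card → anfCoeff g S = 0

/-- The algebraic degree of `g` equals `d`. -/
def DegEq (g : V4 → ZMod 2) (d : ℕ) : Prop := DegLE g d ∧ ¬ DegLE g (d - 1)

/-- The component function `⟨f, v⟩ : x ↦ ⟨f(x), v⟩`. -/
def comp4 (f : V4 → V4) (v : V4) (x : V4) : ZMod 2 := dot4 (f x) v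

/-- `n₃(f)`: the number of nonzero `v` with `deg⟨f,v⟩ = 3`. -/
noncomputable def n3 (f : V4 → V4) : ℕ := {v : V4 | v ≠ 0 ∧ DegEq (comp4 f v) 3}.ncard

/-- The Walsh coefficient `W_f(a,b) = Σ_x (-1)^{⟨f(x),b⟩ + ⟨x,a⟩}`. -/
def walsh (f : V4 → V4) (a b : V4) : ℤ :=
  ∑ x : V4, (-1 : ℤ) ^ (dot4 (f x) b + dot4 x a).val

/-- `Lin(f) = n`: `n` is the maximum of `|W_f(a,b)|` over all `a` and nonzero `b`. -/
def LinEq (f : V4 → V4) (n : ℤ) : Prop :=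
  IsGreatest {t : ℤ | ∃ a b : V4, b ≠ 0 ∧ t = |walsh f a b|} n

/-- `a` has Hamming weight 1. -/
def Wt1 (a : V4) : Prop := {i : Fin 4 | a i ≠ 0}.ncard = 1

/-- `Lin₁(f) = n`: max of `|W_f(a,b)|` over `a, b` of Hamming weight 1. -/
def Lin1Eq (f : V4 → V4) (n : ℤ) : Prop :=
  IsGreatest {t : ℤ | ∃ a b : V4, Wt1 a ∧ Wt1 b ∧ t = |walsh f a b|} n

/-- `Diff₁(f) = n`: max of `|{x : f̂_a(x) = b}|` over `a, b` of Hamming weight 1. -/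
def Diff1Eq (f : V4 → V4) (n : ℕ) : Prop :=
  IsGreatest {t : ℕ | ∃ a b : V4, Wt1 a ∧ Wt1 b ∧ t = {x : V4 | deriv4 f a x = b}.ncard} n

/-- `f` is strongly 2-anti-invariant. -/
def StronglyAntiInv2 (f : V4 → V4) : Prop :=
  ∀ V W : Submodule (ZMod 2) V4, f '' (V : Set V4) = (W : Set V4) →
    (Module.finrank (ZMod 2) V = Module.finrank (ZMod 2) W ∧ Module.finrank (ZMod 2) W < 2)
    ∨ (V = ⊤ ∧ W = ⊤)

/-- Identify `k : ℕ` with a vector of `(𝔽₂)⁴` via binary digits. -/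
def toVec (k : ℕ) : V4 := fun i => (((k / 2 ^ (i : ℕ)) % 2 : ℕ) : ZMod 2)

/-- Identify a vector of `(𝔽₂)⁴` with a natural number via binary digits. -/
def toNat4 (x : V4) : ℕ := ∑ i, (x i).val * 2 ^ (i : ℕ)

/-- The function on `(𝔽₂)⁴` given by a value table of integers. -/
def tableFun (L : List ℕ) (x : V4) : V4 := toVec (L.getD (toNat4 x) 0)


-- ===== Auxiliary development =====

def mono (S : Finset (Fin 4)) (x : V4) : ZMod 2 := ∏ i ∈ S, x i

set_option maxRecDepth 10000 in
lemma delta_sum : ∀ z x : V4,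
    (∑ S ∈ (Finset.univ : Finset (Fin 4)).powerset,
      if (∀ i, z i = 1 → i ∈ S) then mono S x else 0) = if z = x then 1 else 0 := by decide

lemma anf_expand (g : V4 → ZMod 2) (x : V4) :
    g x = ∑ S ∈ (Finset.univ : Finset (Fin 4)).powerset, anfCoeff g S * mono S x := by
  unfold anfCoeff
  simp only [Finset.sum_mul]
  simp only [Finset.sum_filter]
  rw [Finset.sum_comm]
  have : ∀ z : V4, (∑ S ∈ (Finset.univ : Finset (Fin 4)).powerset,
      if (∀ i, z i = 1 → i ∈ S) then g z * mono S x else 0)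
      = g z * (if z = x then 1 else 0) := by
    intro z
    rw [← delta_sum z x, Finset.mul_sum]
    exact Finset.sum_congr rfl (fun S _ => by rw [mul_ite, mul_zero])
  simp only [this]
  simp [Finset.sum_ite_eq', mul_ite]

/-- The symmetric bilinear form associated to `g`. -/
def Bf (g : V4 → ZMod 2) (u x : V4) : ZMod 2 := g (x + u) + g x + g u + g 0

lemma mono_key (S : Finset (Fin 4)) (h : S.card ≤ 2) (u x y : V4) :
    mono S (x + y + u) + mono S (x + y) + mono S u + mono S 0
      = (mono S (x + u) + mono S x + mono S u + mono S 0)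
      + (mono S (y + u) + mono S y + mono S u + mono S 0) := by
  have h012 : S.card = 0 ∨ S.card = 1 ∨ S.card = 2 := by omega
  rcases h012 with h0 | h1 | h2
  · rw [Finset.card_eq_zero] at h0; subst h0
    simp only [mono, Finset.prod_empty]; decide
  · rw [Finset.card_eq_one] at h1; obtain ⟨i, rfl⟩ := h1
    simp only [mono, Finset.prod_singleton, Pi.add_apply, Pi.zero_apply]
    have : ∀ a c e : ZMod 2, (c + e + a) + (c + e) + a + 0
        = ((c + a) + c + a + 0) + ((e + a) + e + a + 0) := by decide
    exact this (u i) (x i) (y i)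
  · rw [Finset.card_eq_two] at h2; obtain ⟨i, j, hij, rfl⟩ := h2
    simp only [mono, Finset.prod_pair hij, Pi.add_apply, Pi.zero_apply]
    have : ∀ a b c d e f : ZMod 2, (c + e + a) * (d + f + b) + (c + e) * (d + f) + a * b + 0 * 0
        = ((c + a) * (d + b) + c * d + a * b + 0 * 0)
        + ((e + a) * (f + b) + e * f + a * b + 0 * 0) := by decide
    exact this (u i) (u j) (x i) (x j) (y i) (y j)

set_option maxHeartbeats 1000000 in
lemma quad_key (c : Finset (Fin 4) → ZMod 2) (hc : ∀ S, 2 < S.card → c S = 0) (u x y : V4)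
    (q : V4 → ZMod 2) (hq : ∀ w, q w = ∑ S ∈ (Finset.univ : Finset (Fin 4)).powerset, c S * mono S w) :
    q (x + y + u) + q (x + y) + q u + q 0
      = (q (x + u) + q x + q u + q 0) + (q (y + u) + q y + q u + q 0) := by
  have hA : (∑ S ∈ (Finset.univ : Finset (Fin 4)).powerset,
      (c S * mono S (x + y + u) + c S * mono S (x + y) + c S * mono S u + c S * mono S 0))
      = (∑ S ∈ (Finset.univ : Finset (Fin 4)).powerset, c S * mono S (x + y + u))
        + (∑ S ∈ (Finset.univ : Finset (Fin 4)).powerset, c S * mono S (x + y))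
        + (∑ S ∈ (Finset.univ : Finset (Fin 4)).powerset, c S * mono S u)
        + (∑ S ∈ (Finset.univ : Finset (Fin 4)).powerset, c S * mono S 0) := by
    rw [Finset.sum_add_distrib, Finset.sum_add_distrib, Finset.sum_add_distrib]
  have hB : (∑ S ∈ (Finset.univ : Finset (Fin 4)).powerset,
      ((c S * mono S (x + u) + c S * mono S x + c S * mono S u + c S * mono S 0)
        + (c S * mono S (y + u) + c S * mono S y + c S * mono S u + c S * mono S 0)))
      = ((∑ S ∈ (Finset.univ : Finset (Fin 4)).powerset, c S * mono S (x + u))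
        + (∑ S ∈ (Finset.univ : Finset (Fin 4)).powerset, c S * mono S x)
        + (∑ S ∈ (Finset.univ : Finset (Fin 4)).powerset, c S * mono S u)
        + (∑ S ∈ (Finset.univ : Finset (Fin 4)).powerset, c S * mono S 0))
      + ((∑ S ∈ (Finset.univ : Finset (Fin 4)).powerset, c S * mono S (y + u))
        + (∑ S ∈ (Finset.univ : Finset (Fin 4)).powerset, c S * mono S y)
        + (∑ S ∈ (Finset.univ : Finset (Fin 4)).powerset, c S * mono S u)
        + (∑ S ∈ (Finset.univ : Finset (Fin 4)).powerset, c S * mono S 0)) := by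
    rw [Finset.sum_add_distrib, Finset.sum_add_distrib, Finset.sum_add_distrib,
      Finset.sum_add_distrib, Finset.sum_add_distrib, Finset.sum_add_distrib,
      Finset.sum_add_distrib]
  have hper : (∑ S ∈ (Finset.univ : Finset (Fin 4)).powerset,
      (c S * mono S (x + y + u) + c S * mono S (x + y) + c S * mono S u + c S * mono S 0))
      = (∑ S ∈ (Finset.univ : Finset (Fin 4)).powerset,
      ((c S * mono S (x + u) + c S * mono S x + c S * mono S u + c S * mono S 0)
        + (c S * mono S (y + u) + c S * mono S y + c S * mono S u + c S * mono S 0))) := by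
    refine Finset.sum_congr rfl (fun S _ => ?_)
    by_cases hS : 2 < S.card
    · rw [hc S hS]; simp
    · have key := mono_key S (by omega) u x y
      linear_combination (c S) * key
  simp only [hq]
  rw [← hA, hper, hB]

lemma Bf_add_right (g : V4 → ZMod 2) (hg : DegLE g 2) (u x y : V4) :
    Bf g u (x + y) = Bf g u x + Bf g u y := by
  have h := quad_key (anfCoeff g) hg u x y g (anf_expand g)
  unfold Bf
  linear_combination h

lemma V4_add_self (v : V4) : v + v = 0 := by
  funext i
  have : ∀ a : ZMod 2, a + a = 0 := by decide
  exact this (v i)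

lemma V4_eq_of_add_eq_zero {a b : V4} (h : a + b = 0) : a = b := by
  have := congrArg (· + b) h
  simpa [add_assoc, V4_add_self] using this

lemma card_bij_shift (p q : V4 → Prop) [DecidablePred p] [DecidablePred q] (z : V4)
    (h : ∀ x, p x ↔ q (x + z)) :
    (Finset.univ.filter p).card = (Finset.univ.filter q).card := by
  apply Finset.card_bij (fun x _ => x + z)
  · intro a ha
    simp only [Finset.mem_filter, Finset.mem_univ, true_and] at ha ⊢
    exact (h a).1 ha
  · intro a _ b _ hab
    exact add_right_cancel hab
  · intro b hb
    simp only [Finset.mem_filter, Finset.mem_univ, true_and] at hb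
    refine ⟨b + z, ?_, ?_⟩
    · simp only [Finset.mem_filter, Finset.mem_univ, true_and]
      exact (h (b + z)).2 (by rwa [add_assoc, V4_add_self, add_zero])
    · rw [add_assoc, V4_add_self, add_zero]

lemma card_univ_V4 : (Finset.univ : Finset V4).card = 16 := by decide

lemma zmod_ne_iff : ∀ a c : ZMod 2, (¬ a = c) ↔ a = c + 1 := by decide

lemma card_filter_eight (φ : V4 → ZMod 2) (z : V4) (hz : ∀ x, φ (x + z) = φ x + 1) (c : ZMod 2) :
    (Finset.univ.filter (fun x => φ x = c)).card = 8 := by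
  have h1 : (Finset.univ.filter (fun x => φ x = c)).card
      = (Finset.univ.filter (fun x => φ x = c + 1)).card := by
    apply card_bij_shift
    intro x
    rw [hz x]
    constructor
    · intro h; rw [h]
    · intro h; exact add_right_cancel h
  have h2 := Finset.card_filter_add_card_filter_not
    (s := (Finset.univ : Finset V4)) (p := fun x => φ x = c)
  rw [card_univ_V4] at h2
  have h3 : (Finset.univ.filter (fun x => ¬ φ x = c)).card
      = (Finset.univ.filter (fun x => φ x = c + 1)).card := by
    congr 1
    exact Finset.filter_congr (fun x _ => zmod_ne_iff (φ x) c)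
  omega

lemma card_filter_four (φ ψ : V4 → ZMod 2) (z₁ : V4) (h₁ : ∀ x, φ (x + z₁) = φ x + 1)
    (z₂ : V4) (h₂p : ∀ x, φ (x + z₂) = φ x) (h₂ : ∀ x, ψ (x + z₂) = ψ x + 1) (c d : ZMod 2) :
    (Finset.univ.filter (fun x => φ x = c ∧ ψ x = d)).card = 4 := by
  have h8 := card_filter_eight φ z₁ h₁ c
  have hsplit : (Finset.univ.filter (fun x => φ x = c ∧ ψ x = d)).card
      + (Finset.univ.filter (fun x => φ x = c ∧ ¬ ψ x = d)).card = 8 := by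
    have := Finset.card_filter_add_card_filter_not
      (s := Finset.univ.filter (fun x : V4 => φ x = c)) (p := fun x => ψ x = d)
    rw [Finset.filter_filter, Finset.filter_filter] at this
    rw [← h8]
    exact this
  have hswap : (Finset.univ.filter (fun x => φ x = c ∧ ψ x = d)).card
      = (Finset.univ.filter (fun x => φ x = c ∧ ¬ ψ x = d)).card := by
    refine card_bij_shift (fun x => φ x = c ∧ ψ x = d) (fun x => φ x = c ∧ ¬ ψ x = d) z₂ ?_
    intro x
    rw [h₂p x, h₂ x]
    have hne : ∀ a d : ZMod 2, a = d → ¬(a + 1 = d) := by decide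
    have hne2 : ∀ a d : ZMod 2, ¬(a + 1 = d) → a = d := by decide
    constructor
    · rintro ⟨hc, hd⟩
      exact ⟨hc, hne _ _ hd⟩
    · rintro ⟨hc, hd⟩
      exact ⟨hc, hne2 _ _ hd⟩
  omega

lemma radical_exists (g : V4 → ZMod 2) (hg : DegLE g 2)
    (hbal : (∑ x : V4, ((-1:ℤ)) ^ (g x).val) = 0) :
    ∃ u : V4, u ≠ 0 ∧ ∀ x, Bf g u x = 0 := by
  by_contra hno
  push_neg at hno
  have sign_mul : ∀ a b : ZMod 2, ((-1:ℤ))^(a+b).val = (-1)^a.val * (-1)^b.val := by decide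
  have sign_flip : ∀ a : ZMod 2, ((-1:ℤ))^((a+1).val) = -((-1)^a.val) := by decide
  have key1 : (∑ u : V4, ∑ x : V4, ((-1:ℤ))^((g (x+u) + g x).val))
      = (∑ x : V4, ((-1:ℤ)) ^ (g x).val) * (∑ y : V4, ((-1:ℤ)) ^ (g y).val) := by
    have step1 : ∀ u x : V4, ((-1:ℤ))^((g (x+u) + g x).val)
        = ((-1:ℤ))^(g (x+u)).val * ((-1:ℤ))^(g x).val := fun u x => sign_mul _ _
    simp only [step1]
    rw [Finset.sum_comm]
    have step2 : ∀ x : V4, (∑ u : V4, ((-1:ℤ))^(g (x+u)).val * ((-1:ℤ))^(g x).val)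
        = (∑ y : V4, ((-1:ℤ))^(g y).val) * ((-1:ℤ))^(g x).val := by
      intro x
      rw [← Finset.sum_mul]
      congr 1
      exact Fintype.sum_equiv (Equiv.addLeft x) _ _ fun u => rfl
    simp only [step2]
    rw [← Finset.mul_sum]
  have tzero : ∀ u : V4, u ≠ 0 → (∑ x : V4, ((-1:ℤ))^((g (x+u) + g x).val)) = 0 := by
    intro u hu
    obtain ⟨x₀, hx₀⟩ := hno u hu
    have h1 : Bf g u x₀ = 1 := by
      revert hx₀; generalize Bf g u x₀ = a; revert a; decide
    have flip : ∀ x : V4, g (x + x₀ + u) + g (x + x₀) = g (x + u) + g x + 1 := by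
      intro x
      have hadd := Bf_add_right g hg u x x₀
      unfold Bf at hadd h1
      linear_combination hadd + h1
    have re : (∑ x : V4, ((-1:ℤ))^((g (x+u) + g x).val))
        = ∑ x : V4, ((-1:ℤ))^((g (x + x₀ + u) + g (x + x₀)).val) := by
      refine (Fintype.sum_equiv (Equiv.addRight x₀) _ _ fun x => ?_).symm
      simp only [Equiv.coe_addRight]
    have re2 : (∑ x : V4, ((-1:ℤ))^((g (x + x₀ + u) + g (x + x₀)).val))
        = -∑ x : V4, ((-1:ℤ))^((g (x + u) + g x).val) := by
      rw [← Finset.sum_neg_distrib]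
      refine Finset.sum_congr rfl fun x _ => ?_
      rw [flip x, sign_flip]
    have := re.trans re2
    linarith
  have t0 : (∑ x : V4, ((-1:ℤ))^((g (x+(0:V4)) + g x).val)) = 16 := by
    have : ∀ x : V4, ((-1:ℤ))^((g (x+(0:V4)) + g x).val) = 1 := by
      intro x
      rw [add_zero]
      have : ∀ a : ZMod 2, ((-1:ℤ))^((a+a).val) = 1 := by decide
      exact this (g x)
    simp only [this]
    simp
  have final : (∑ u : V4, ∑ x : V4, ((-1:ℤ))^((g (x+u) + g x).val)) = 16 := by
    rw [Finset.sum_eq_single (0:V4)]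
    · exact t0
    · intro u _ hu; exact tzero u hu
    · intro h; exact absurd (Finset.mem_univ _) h
  rw [key1, hbal, zero_mul] at final
  norm_num at final

lemma Bf_symm (g : V4 → ZMod 2) (u x : V4) : Bf g u x = Bf g x u := by
  unfold Bf
  rw [add_comm x u]
  ring

lemma Bf_self (g : V4 → ZMod 2) (u : V4) : Bf g u u = 0 := by
  unfold Bf
  rw [V4_add_self]
  have : ∀ a b : ZMod 2, b + a + a + b = 0 := by decide
  exact this _ _

lemma Bf_zero_right (g : V4 → ZMod 2) (u : V4) : Bf g u 0 = 0 := by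
  unfold Bf
  rw [zero_add]
  have : ∀ a b : ZMod 2, a + b + a + b = 0 := by decide
  exact this _ _

lemma Bf_add_left (g : V4 → ZMod 2) (hg : DegLE g 2) (u v x : V4) :
    Bf g (u + v) x = Bf g u x + Bf g v x := by
  rw [Bf_symm g (u+v) x, Bf_add_right g hg x u v, Bf_symm g u x, Bf_symm g v x]

lemma Bf_shift (g : V4 → ZMod 2) (hg : DegLE g 2) (a x z : V4) :
    Bf g a (x + z) = Bf g a x + Bf g a z := Bf_add_right g hg a x z

lemma radical_four (g : V4 → ZMod 2) (hg : DegLE g 2) (a b : V4) (hab : Bf g a b = 1)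
    (k : V4) (hk0 : k ≠ 0) (hk : ∀ x, Bf g k x = 0) :
    ∃ m : V4, m ≠ 0 ∧ m ≠ k ∧ (∀ x, Bf g m x = 0) := by
  classical
  set U : Finset V4 := Finset.univ.filter (fun x => Bf g a x = 0 ∧ Bf g b x = 0) with hU
  have hUcard : U.card = 4 := by
    refine card_filter_four (Bf g a) (Bf g b) b ?_ a ?_ ?_ 0 0
    · intro x; rw [Bf_shift g hg a x b, hab]
    · intro x; rw [Bf_shift g hg a x a, Bf_self, add_zero]
    · intro x; rw [Bf_shift g hg b x a, Bf_symm g b a, hab]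
  have h0U : (0:V4) ∈ U := by
    simp only [hU, Finset.mem_filter, Finset.mem_univ, true_and]
    exact ⟨Bf_zero_right g a, Bf_zero_right g b⟩
  have hkU : k ∈ U := by
    simp only [hU, Finset.mem_filter, Finset.mem_univ, true_and]
    exact ⟨by rw [Bf_symm]; exact hk a, by rw [Bf_symm]; exact hk b⟩
  have hsub : ({0, k} : Finset V4) ⊆ U := by
    intro t ht
    simp only [Finset.mem_insert, Finset.mem_singleton] at ht
    rcases ht with rfl | rfl
    · exact h0U
    · exact hkU
  have hcard2 : ({0, k} : Finset V4).card = 2 := by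
    rw [Finset.card_insert_of_notMem (by simpa using (Ne.symm hk0)), Finset.card_singleton]
  have hpos : 0 < (U \ {0, k}).card := by
    rw [Finset.card_sdiff_of_subset hsub, hUcard, hcard2]
    norm_num
  obtain ⟨m, hm⟩ := Finset.card_pos.1 hpos
  rw [Finset.mem_sdiff] at hm
  obtain ⟨hmU, hmnot⟩ := hm
  simp only [Finset.mem_insert, Finset.mem_singleton, not_or] at hmnot
  obtain ⟨hm0, hmk⟩ := hmnot
  simp only [hU, Finset.mem_filter, Finset.mem_univ, true_and] at hmU
  obtain ⟨hma, hmb⟩ := hmU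
  refine ⟨m, hm0, hmk, ?_⟩
  -- spanning argument
  have values1 : ∀ α : Bool, Bf g b (cond α a 0) = (cond α 1 0) := by
    intro α; cases α
    · exact Bf_zero_right g b
    · show Bf g b a = 1
      rw [Bf_symm g b a]; exact hab
  have values2 : ∀ β : Bool, Bf g a (cond β b 0) = (cond β 1 0) := by
    intro β; cases β
    · exact Bf_zero_right g a
    · exact hab
  have zaa : ∀ α : Bool, Bf g a (cond α a 0) = 0 := by
    intro α; cases α
    · exact Bf_zero_right g a
    · exact Bf_self g a
  have zbb : ∀ β : Bool, Bf g b (cond β b 0) = 0 := by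
    intro β; cases β
    · exact Bf_zero_right g b
    · exact Bf_self g b
  have zbk : ∀ γ : Bool, Bf g b (cond γ k 0) = 0 := by
    intro γ; cases γ
    · exact Bf_zero_right g b
    · show Bf g b k = 0
      rw [Bf_symm]; exact hk b
  have zbm : ∀ δ : Bool, Bf g b (cond δ m 0) = 0 := by
    intro δ; cases δ
    · exact Bf_zero_right g b
    · exact hmb
  have zak : ∀ γ : Bool, Bf g a (cond γ k 0) = 0 := by
    intro γ; cases γ
    · exact Bf_zero_right g a
    · show Bf g a k = 0
      rw [Bf_symm]; exact hk a
  have zam : ∀ δ : Bool, Bf g a (cond δ m 0) = 0 := by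
    intro δ; cases δ
    · exact Bf_zero_right g a
    · exact hma
  set F : Bool × Bool × Bool × Bool → V4 :=
    fun t => (cond t.1 a 0) + (cond t.2.1 b 0) + (cond t.2.2.1 k 0) + (cond t.2.2.2 m 0) with hF
  have evalb : ∀ t, Bf g b (F t) = (cond t.1 1 0) := by
    rintro ⟨α, β, γ, δ⟩
    simp only [hF]
    rw [Bf_shift g hg, Bf_shift g hg, Bf_shift g hg]
    rw [values1 α, zbb β, zbk γ, zbm δ, add_zero, add_zero, add_zero]
  have evala : ∀ t, Bf g a (F t) = (cond t.2.1 1 0) := by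
    rintro ⟨α, β, γ, δ⟩
    simp only [hF]
    rw [Bf_shift g hg, Bf_shift g hg, Bf_shift g hg]
    rw [values2 β, zaa α, zak γ, zam δ, add_zero, add_zero, zero_add]
  -- helper facts about k, m, k+m
  have fact1 : k + m ≠ 0 := fun h => hmk (V4_eq_of_add_eq_zero h).symm
  have fact2 : m ≠ k + m := by
    intro h
    apply hk0
    have := congrArg (fun w => w + m) h
    simp only [add_assoc, V4_add_self, add_zero] at this
    exact this.symm
  have fact3 : k ≠ k + m := by
    intro h
    apply hm0
    have := congrArg (fun w => k + w) h
    simp only [← add_assoc, V4_add_self, zero_add] at this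
    exact this.symm
  have km : ∀ (γ δ γ' δ' : Bool), (cond γ k 0) + (cond δ m 0) = (cond γ' k 0) + (cond δ' m 0)
      → γ = γ' ∧ δ = δ' := by
    intro γ δ γ' δ' hh
    cases γ <;> cases δ <;> cases γ' <;> cases δ' <;>
      simp only [Bool.cond_true, Bool.cond_false, add_zero, zero_add] at hh
    · exact ⟨rfl, rfl⟩
    · exact absurd hh.symm hm0
    · exact absurd hh.symm hk0
    · exact absurd (V4_eq_of_add_eq_zero hh.symm).symm hmk
    · exact absurd hh hm0
    · exact ⟨rfl, rfl⟩
    · exact absurd hh hmk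
    · exact absurd hh fact2
    · exact absurd hh hk0
    · exact absurd hh.symm hmk
    · exact ⟨rfl, rfl⟩
    · exact absurd hh fact3
    · exact absurd hh fact1
    · exact absurd hh.symm fact2
    · exact absurd hh.symm fact3
    · exact ⟨rfl, rfl⟩
  have hinj : Function.Injective F := by
    rintro ⟨α, β, γ, δ⟩ ⟨α', β', γ', δ'⟩ h
    have e1 : (cond α (1:ZMod 2) 0) = cond α' 1 0 := by
      rw [← evalb (α, β, γ, δ), ← evalb (α', β', γ', δ'), h]
    have e2 : (cond β (1:ZMod 2) 0) = cond β' 1 0 := by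
      rw [← evala (α, β, γ, δ), ← evala (α', β', γ', δ'), h]
    have hα : α = α' := by revert e1; cases α <;> cases α' <;> simp
    have hβ : β = β' := by revert e2; cases β <;> cases β' <;> simp
    subst hα; subst hβ
    simp only [hF] at h
    have hc : ((cond α a 0) + (cond β b 0)) + ((cond γ k 0) + (cond δ m 0))
        = ((cond α a 0) + (cond β b 0)) + ((cond γ' k 0) + (cond δ' m 0)) := by
      rw [← add_assoc, ← add_assoc]
      exact h
    have h' := add_left_cancel hc
    obtain ⟨hγ, hδ⟩ := km γ δ γ' δ' h'
    simp [hγ, hδ]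
  have hsurj : Function.Surjective F := by
    have hcards : Fintype.card (Bool × Bool × Bool × Bool) = Fintype.card V4 := by
      simp [Fintype.card_fun]
    exact ((Fintype.bijective_iff_injective_and_card F).2 ⟨hinj, hcards⟩).2
  intro x
  obtain ⟨⟨α, β, γ, δ⟩, rfl⟩ := hsurj x
  simp only [hF]
  rw [Bf_shift g hg, Bf_shift g hg, Bf_shift g hg]
  have t1 : Bf g m (cond α a 0) = 0 := by
    cases α
    · exact Bf_zero_right g m
    · show Bf g m a = 0
      rw [Bf_symm]; exact hma
  have t2 : Bf g m (cond β b 0) = 0 := by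
    cases β
    · exact Bf_zero_right g m
    · show Bf g m b = 0
      rw [Bf_symm]; exact hmb
  have t3 : Bf g m (cond γ k 0) = 0 := by
    cases γ
    · exact Bf_zero_right g m
    · show Bf g m k = 0
      rw [Bf_symm]; exact hk m
  have t4 : Bf g m (cond δ m 0) = 0 := by
    cases δ
    · exact Bf_zero_right g m
    · exact Bf_self g m
  rw [t1, t2, t3, t4]
  simp

-- small decide facts
lemma exists_one : ∀ v : V4, v ≠ 0 → ∃ i, v i = 1 := by decide
def evec (i : Fin 4) : V4 := fun j => if j = i then 1 else 0
lemma dot4_evec : ∀ (i : Fin 4) (v : V4), dot4 (evec i) v = v i := by decide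
set_option maxRecDepth 4000 in
lemma exists_sep : ∀ v₁ v₂ : V4, v₁ ≠ 0 → v₂ ≠ 0 → v₁ ≠ v₂ →
    ∃ z : V4, dot4 z v₁ = 0 ∧ dot4 z v₂ = 1 := by decide
lemma sum_dot_zero : ∀ v : V4, (∑ y : V4, dot4 y v) = 0 := by decide
lemma sum_sign_dot_zero : ∀ v : V4, v ≠ 0 → (∑ y : V4, ((-1:ℤ)) ^ (dot4 y v).val) = 0 := by
  decide
lemma zmod_ne_one (a : ZMod 2) (h : a ≠ 1) : a = 0 := by revert h; revert a; decide
lemma zmod_ne_zero (a : ZMod 2) (h : a ≠ 0) : a = 1 := by revert h; revert a; decide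
lemma zmod_rearrange : ∀ a b c d : ZMod 2, a + b + c + d = 0 → a + b = c + d := by decide

lemma dot4_add_left (x z v : V4) : dot4 (x + z) v = dot4 x v + dot4 z v := by
  unfold dot4
  simp only [Pi.add_apply, add_mul]
  exact Finset.sum_add_distrib

lemma dot4_add_right (x v w : V4) : dot4 x (v + w) = dot4 x v + dot4 x w := by
  unfold dot4
  simp only [Pi.add_apply, mul_add]
  exact Finset.sum_add_distrib

lemma comp4_add (f : V4 → V4) (v w : V4) (x : V4) :
    comp4 f (v + w) x = comp4 f v x + comp4 f w x := dot4_add_right (f x) v w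

lemma anfCoeff_add (g h : V4 → ZMod 2) (S : Finset (Fin 4)) :
    anfCoeff (fun x => g x + h x) S = anfCoeff g S + anfCoeff h S := by
  unfold anfCoeff
  exact Finset.sum_add_distrib

lemma balanced_comp (f : V4 → V4) (hbij : Function.Bijective f) (v : V4) (hv : v ≠ 0) :
    (∑ x : V4, ((-1:ℤ)) ^ ((comp4 f v x).val)) = 0 := by
  have h := hbij.sum_comp (fun y => ((-1:ℤ)) ^ ((dot4 y v).val))
  unfold comp4
  rw [h]
  exact sum_sign_dot_zero v hv

lemma degle3_comp (f : V4 → V4) (hbij : Function.Bijective f) (v : V4) :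
    DegLE (comp4 f v) 3 := by
  intro S hS
  have hle : S.card ≤ 4 := by
    have := Finset.card_le_univ S
    simpa [Finset.card_univ] using this
  have hSuniv : S = Finset.univ := Finset.eq_univ_of_card S (by simp; omega)
  subst hSuniv
  unfold anfCoeff
  rw [Finset.filter_true_of_mem (by intro x _; intro i _; exact Finset.mem_univ i)]
  have h := hbij.sum_comp (fun y => dot4 y v)
  unfold comp4
  rw [h]
  exact sum_dot_zero v

set_option maxHeartbeats 1000000 in
/-- Core: a weakly APN bijection has no two distinct nonzero components of degree ≤ 2. -/
theorem no_two_quad (f : V4 → V4) (hbij : Function.Bijective f) (hAPN : WeaklyAPN4 f)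
    (v₁ v₂ : V4) (h1 : v₁ ≠ 0) (h2 : v₂ ≠ 0) (h12 : v₁ ≠ v₂)
    (d1 : DegLE (comp4 f v₁) 2) (d2 : DegLE (comp4 f v₂) 2) : False := by
  classical
  set g₁ := comp4 f v₁ with hg₁
  set g₂ := comp4 f v₂ with hg₂
  set g₃ := comp4 f (v₁ + v₂) with hg₃
  have hg3eq : ∀ x, g₃ x = g₁ x + g₂ x := fun x => comp4_add f v₁ v₂ x
  have d3 : DegLE g₃ 2 := by
    intro S hS
    have : anfCoeff g₃ S = anfCoeff g₁ S + anfCoeff g₂ S := by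
      have : g₃ = fun x => g₁ x + g₂ x := funext hg3eq
      rw [this]
      exact anfCoeff_add g₁ g₂ S
    rw [this, d1 S hS, d2 S hS, add_zero]
  have hv12 : v₁ + v₂ ≠ 0 := fun h => h12 (V4_eq_of_add_eq_zero h)
  have hB3 : ∀ u x, Bf g₃ u x = Bf g₁ u x + Bf g₂ u x := by
    intro u x
    unfold Bf
    simp only [hg3eq]
    ring
  -- Step 1: find common radical vector
  have key : ∃ u : V4, u ≠ 0 ∧ (∀ x, Bf g₁ u x = 0) ∧ (∀ x, Bf g₂ u x = 0) := by
    by_contra hno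
    have triv12 : ∀ u : V4, (∀ x, Bf g₁ u x = 0) → (∀ x, Bf g₂ u x = 0) → u = 0 := by
      intro u hA hB
      by_contra h0
      exact hno ⟨u, h0, hA, hB⟩
    have triv13 : ∀ u : V4, (∀ x, Bf g₁ u x = 0) → (∀ x, Bf g₃ u x = 0) → u = 0 := by
      intro u hA hC
      refine triv12 u hA (fun x => ?_)
      have h := hB3 u x
      rw [hC x, hA x, zero_add] at h
      exact h.symm
    have triv23 : ∀ u : V4, (∀ x, Bf g₂ u x = 0) → (∀ x, Bf g₃ u x = 0) → u = 0 := by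
      intro u hB hC
      refine triv12 u (fun x => ?_) hB
      have h := hB3 u x
      rw [hC x, hB x, add_zero] at h
      exact h.symm
    obtain ⟨u₁, hu₁, hK₁⟩ := radical_exists g₁ d1 (balanced_comp f hbij v₁ h1)
    obtain ⟨u₂, hu₂, hK₂⟩ := radical_exists g₂ d2 (balanced_comp f hbij v₂ h2)
    obtain ⟨u₃, hu₃, hK₃⟩ := radical_exists g₃ d3 (balanced_comp f hbij (v₁ + v₂) hv12)
    -- B₁ and B₂ are nonzero
    have hB1ne : ∃ a b, Bf g₁ a b = 1 := by
      by_contra hz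
      push_neg at hz
      exact hu₂ (triv12 u₂ (fun x => zmod_ne_one _ (hz u₂ x)) hK₂)
    have hB2ne : ∃ a b, Bf g₂ a b = 1 := by
      by_contra hz
      push_neg at hz
      exact hu₁ (triv12 u₁ hK₁ (fun x => zmod_ne_one _ (hz u₁ x)))
    obtain ⟨a₁, b₁, hab₁⟩ := hB1ne
    obtain ⟨a₂, b₂, hab₂⟩ := hB2ne
    obtain ⟨m₁, hm₁0, hm₁u, hm₁⟩ := radical_four g₁ d1 a₁ b₁ hab₁ u₁ hu₁ hK₁
    obtain ⟨m₂, hm₂0, hm₂u, hm₂⟩ := radical_four g₂ d2 a₂ b₂ hab₂ u₂ hu₂ hK₂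
    -- Q₁, Q₂ : four-element subsets of the radicals
    set Q₁ : Finset V4 := {0, u₁, m₁, u₁ + m₁} with hQ₁
    set Q₂ : Finset V4 := {0, u₂, m₂, u₂ + m₂} with hQ₂
    have memQ₁ : ∀ q ∈ Q₁, ∀ x, Bf g₁ q x = 0 := by
      intro q hq x
      simp only [hQ₁, Finset.mem_insert, Finset.mem_singleton] at hq
      rcases hq with rfl | rfl | rfl | rfl
      · rw [Bf_symm]; exact Bf_zero_right g₁ x
      · exact hK₁ x
      · exact hm₁ x
      · rw [Bf_add_left g₁ d1, hK₁ x, hm₁ x, add_zero]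
    have memQ₂ : ∀ q ∈ Q₂, ∀ x, Bf g₂ q x = 0 := by
      intro q hq x
      simp only [hQ₂, Finset.mem_insert, Finset.mem_singleton] at hq
      rcases hq with rfl | rfl | rfl | rfl
      · rw [Bf_symm]; exact Bf_zero_right g₂ x
      · exact hK₂ x
      · exact hm₂ x
      · rw [Bf_add_left g₂ d2, hK₂ x, hm₂ x, add_zero]
    have cardQ₁ : Q₁.card = 4 := by
      have hw0 : u₁ + m₁ ≠ 0 := fun h => hm₁u (V4_eq_of_add_eq_zero h).symm
      have hwu : u₁ + m₁ ≠ u₁ := by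
        intro h
        apply hm₁0
        have := congrArg (fun w => u₁ + w) h
        simpa [← add_assoc, V4_add_self] using this
      have hwm : u₁ + m₁ ≠ m₁ := by
        intro h
        apply hu₁
        have := congrArg (fun w => w + m₁) h
        simpa [add_assoc, V4_add_self] using this
      rw [hQ₁]
      rw [Finset.card_insert_of_notMem (by
        simp only [Finset.mem_insert, Finset.mem_singleton, not_or]
        exact ⟨Ne.symm hu₁, Ne.symm hm₁0, Ne.symm hw0⟩)]
      rw [Finset.card_insert_of_notMem (by
        simp only [Finset.mem_insert, Finset.mem_singleton, not_or]
        exact ⟨Ne.symm hm₁u, Ne.symm hwu⟩)]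
      rw [Finset.card_insert_of_notMem (by
        simp only [Finset.mem_singleton]
        exact Ne.symm hwm)]
      rw [Finset.card_singleton]
    have cardQ₂ : Q₂.card = 4 := by
      have hw0 : u₂ + m₂ ≠ 0 := fun h => hm₂u (V4_eq_of_add_eq_zero h).symm
      have hwu : u₂ + m₂ ≠ u₂ := by
        intro h
        apply hm₂0
        have := congrArg (fun w => u₂ + w) h
        simpa [← add_assoc, V4_add_self] using this
      have hwm : u₂ + m₂ ≠ m₂ := by
        intro h
        apply hu₂
        have := congrArg (fun w => w + m₂) h
        simpa [add_assoc, V4_add_self] using this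
      rw [hQ₂]
      rw [Finset.card_insert_of_notMem (by
        simp only [Finset.mem_insert, Finset.mem_singleton, not_or]
        exact ⟨Ne.symm hu₂, Ne.symm hm₂0, Ne.symm hw0⟩)]
      rw [Finset.card_insert_of_notMem (by
        simp only [Finset.mem_insert, Finset.mem_singleton, not_or]
        exact ⟨Ne.symm hm₂u, Ne.symm hwu⟩)]
      rw [Finset.card_insert_of_notMem (by
        simp only [Finset.mem_singleton]
        exact Ne.symm hwm)]
      rw [Finset.card_singleton]
    -- sum map is injective on Q₁ × Q₂, hence covers V4
    have hinj : Set.InjOn (fun p : V4 × V4 => p.1 + p.2) ((Q₁ ×ˢ Q₂ : Finset (V4 × V4)) : Set (V4 × V4)) := by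
      rintro ⟨p₁, p₂⟩ hp ⟨q₁, q₂⟩ hq h
      simp only [Finset.coe_product, Set.mem_prod, Finset.mem_coe] at hp hq
      simp only at h
      -- h : p₁ + p₂ = q₁ + q₂
      have hsum : p₁ + q₁ = p₂ + q₂ := by
        have h' := congrArg (fun w => w + (p₂ + q₁)) h
        rw [show p₁ + p₂ + (p₂ + q₁) = p₁ + q₁ + (p₂ + p₂) by ring,
            show q₁ + q₂ + (p₂ + q₁) = p₂ + q₂ + (q₁ + q₁) by ring,
            V4_add_self, V4_add_self, add_zero, add_zero] at h'
        exact h'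
      have hK1mem : ∀ x, Bf g₁ (p₁ + q₁) x = 0 := by
        intro x
        rw [Bf_add_left g₁ d1, memQ₁ p₁ hp.1 x, memQ₁ q₁ hq.1 x, add_zero]
      have hK2mem : ∀ x, Bf g₂ (p₁ + q₁) x = 0 := by
        intro x
        rw [hsum, Bf_add_left g₂ d2, memQ₂ p₂ hp.2 x, memQ₂ q₂ hq.2 x, add_zero]
      have hz : p₁ + q₁ = 0 := triv12 _ hK1mem hK2mem
      have e1 : p₁ = q₁ := V4_eq_of_add_eq_zero hz
      have e2 : p₂ = q₂ := V4_eq_of_add_eq_zero (by rw [← hsum]; exact hz)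
      simp [e1, e2]
    have hcard16 : ((Q₁ ×ˢ Q₂).image (fun p : V4 × V4 => p.1 + p.2)).card = 16 := by
      rw [Finset.card_image_of_injOn hinj, Finset.card_product, cardQ₁, cardQ₂]
    have huniv : (Q₁ ×ˢ Q₂).image (fun p : V4 × V4 => p.1 + p.2) = Finset.univ := by
      apply Finset.eq_univ_of_card
      rw [hcard16]
      decide
    have cover : ∀ t : V4, ∃ p q : V4, p ∈ Q₁ ∧ q ∈ Q₂ ∧ t = p + q := by
      intro t
      have : t ∈ (Q₁ ×ˢ Q₂).image (fun p : V4 × V4 => p.1 + p.2) := by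
        rw [huniv]; exact Finset.mem_univ t
      obtain ⟨⟨p, q⟩, hpq, hpq2⟩ := Finset.mem_image.1 this
      rw [Finset.mem_product] at hpq
      exact ⟨p, q, hpq.1, hpq.2, hpq2.symm⟩
    -- the λ argument
    have hlam : ∀ x, Bf g₁ u₃ x = 0 := by
      intro x
      obtain ⟨p, q, hp, hq, rfl⟩ := cover x
      rw [Bf_shift g₁ d1]
      have e1 : Bf g₁ u₃ p = 0 := by rw [Bf_symm]; exact memQ₁ p hp u₃
      have e2 : Bf g₁ u₃ q = 0 := by
        have h3 := hB3 u₃ q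
        rw [hK₃ q] at h3
        have e2' : Bf g₂ u₃ q = 0 := by rw [Bf_symm]; exact memQ₂ q hq u₃
        rw [e2', add_zero] at h3
        exact h3.symm
      rw [e1, e2, add_zero]
    exact hu₃ (triv13 u₃ hlam hK₃)
  -- Step 2: contradiction with weak APN
  obtain ⟨u, hu, hK1, hK2⟩ := key
  set A : Finset V4 := Finset.univ.filter
    (fun y => dot4 y v₁ = g₁ u + g₁ 0 ∧ dot4 y v₂ = g₂ u + g₂ 0) with hA
  have hAcard : A.card = 4 := by
    obtain ⟨i, hi⟩ := exists_one v₁ h1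
    obtain ⟨z, hz1, hz2⟩ := exists_sep v₁ v₂ h1 h2 h12
    refine card_filter_four (fun y => dot4 y v₁) (fun y => dot4 y v₂) (evec i) ?_ z ?_ ?_ _ _
    · intro x; rw [dot4_add_left, dot4_evec, hi]
    · intro x; rw [dot4_add_left, hz1, add_zero]
    · intro x; rw [dot4_add_left, hz2]
  have hsubA : Set.range (deriv4 f u) ⊆ (A : Set V4) := by
    rintro y ⟨x, rfl⟩
    simp only [hA, Finset.coe_filter, Set.mem_setOf_eq, Finset.mem_univ, true_and]
    unfold deriv4
    constructor
    · rw [dot4_add_left]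
      exact zmod_rearrange _ _ _ _ (hK1 x)
    · rw [dot4_add_left]
      exact zmod_rearrange _ _ _ _ (hK2 x)
  have happly := hAPN u hu
  have hle : (Set.range (deriv4 f u)).ncard ≤ 4 := by
    have := Set.ncard_le_ncard hsubA (Finset.finite_toSet A)
    rwa [Set.ncard_coe_finset, hAcard] at this
  omega

lemma evec_facts : evec 0 ≠ 0 ∧ evec 1 ≠ 0 ∧ evec 0 ≠ evec 1 := by decide


/-- Fact (refine-degree): a weakly APN permutation `f : (𝔽₂)⁴ → (𝔽₂)⁴` with `f 0 = 0`
has algebraic degree exactly 3, and `n₃(f) ∈ {14, 15}`. -/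
theorem deg_three_and_n3_refined_of_weaklyAPN_perm
    (f : V4 → V4) (hbij : Function.Bijective f) (hf0 : f 0 = 0)
    (hAPN : WeaklyAPN4 f) :
    (∀ v : V4, v ≠ 0 → DegLE (comp4 f v) 3) ∧
    (∃ v : V4, v ≠ 0 ∧ DegEq (comp4 f v) 3) ∧
    n3 f ∈ ({14, 15} : Set ℕ) := by
  classical
  obtain ⟨he0, he1, he01⟩ := evec_facts
  have P1 : ∀ v : V4, v ≠ 0 → DegLE (comp4 f v) 3 := fun v _ => degle3_comp f hbij v
  have hD : (3:ℕ) - 1 = 2 := rfl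
  refine ⟨P1, ?_, ?_⟩
  · -- existence of a degree-3 component
    by_cases hq : DegLE (comp4 f (evec 0)) 2
    · refine ⟨evec 1, he1, degle3_comp f hbij _, ?_⟩
      rw [hD]
      intro hq2
      exact no_two_quad f hbij hAPN (evec 0) (evec 1) he0 he1 he01 hq hq2
    · refine ⟨evec 0, he0, degle3_comp f hbij _, ?_⟩
      rw [hD]
      exact hq
  · -- n3 ∈ {14, 15}
    set Bad : Set V4 := {v | v ≠ 0 ∧ DegLE (comp4 f v) 2} with hBad
    have hss : Bad.Subsingleton := by
      intro v hv w hw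
      by_contra hne
      exact no_two_quad f hbij hAPN v w hv.1 hw.1 hne hv.2 hw.2
    have hsub : Bad ⊆ {v : V4 | v ≠ 0} := fun v hv => hv.1
    have hNZ : {v : V4 | v ≠ 0}.ncard = 15 := by
      have : {v : V4 | v ≠ 0} = ↑(Finset.univ.filter (fun v : V4 => v ≠ 0)) := by
        ext v; simp
      rw [this, Set.ncard_coe_finset]
      decide
    have hdiff : {v : V4 | v ≠ 0 ∧ DegEq (comp4 f v) 3} = {v : V4 | v ≠ 0} \ Bad := by
      ext v
      simp only [hBad, Set.mem_setOf_eq, Set.mem_diff]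
      constructor
      · rintro ⟨hv, _, hnd⟩
        rw [hD] at hnd
        exact ⟨hv, fun hbad => hnd hbad.2⟩
      · rintro ⟨hv, hbad⟩
        refine ⟨hv, P1 v hv, ?_⟩
        rw [hD]
        intro hdl
        exact hbad ⟨hv, hdl⟩
    have hn3 : n3 f = 15 - Bad.ncard := by
      rw [n3, hdiff, Set.ncard_diff hsub (Set.toFinite _), hNZ]
    rcases hss.eq_empty_or_singleton with hemp | ⟨a, hsing⟩
    · rw [hn3, hemp, Set.ncard_empty]
      right
      rfl
    · rw [hn3, hsing, Set.ncard_singleton]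
      left
      rfl
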